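/- Let F : ℝⁿ → ℝ be C² with minimizer w*, M-Lipschitz Hessian, and let Ĥ be symmetric positive definite. If w⁺ = w − Ĥ⁻¹∇F(w), then ‖w⁺ − w*‖ ≤ (‖Ĥ − ∇²F(w)‖ / λ_min(Ĥ)) ‖w − w*‖ + (M / (2 λ_min(Ĥ))) ‖w − w*‖². -/

import Mathlib

open scoped InnerProductSpace

lemma taylor_bound {n : ℕ} (g : EuclideanSpace ℝ (Fin n) → EuclideanSpace ℝ (Fin n))
    (hg : ContDiff ℝ 1 g) (M : ℝ) (hM : 0 ≤ M)
    (hlip : ∀ x y, ‖fderiv ℝ g x - fderiv ℝ g y‖ ≤ M * ‖x - y‖)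
    (a b : EuclideanSpace ℝ (Fin n)) :
    ‖g b - g a - fderiv ℝ g b (b - a)‖ ≤ M / 2 * ‖b - a‖ ^ 2 := by
  set e := b - a with he
  have hab : a + e = b := by rw [he]; abel
  have hγ : ∀ t : ℝ, HasDerivAt (fun t : ℝ => a + t • e) e t := by
    intro t
    simpa using ((hasDerivAt_id t).smul_const e).const_add a
  have hf : ∀ t : ℝ, HasDerivAt (fun t : ℝ => g (a + t • e))
      ((fderiv ℝ g (a + t • e)) e) t := by
    intro t
    exact ((hg.differentiable (by norm_num)).differentiableAt.hasFDerivAt).comp_hasDerivAt t (hγ t)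
  have hcont : Continuous fun t : ℝ => (fderiv ℝ g (a + t • e)) e := by
    have h1 : Continuous (fderiv ℝ g) := hg.continuous_fderiv (by norm_num)
    exact (h1.comp (continuous_const.add (continuous_id.smul continuous_const))).clm_apply
      continuous_const
  have hint : g b - g a = ∫ t in (0:ℝ)..1, (fderiv ℝ g (a + t • e)) e := by
    rw [intervalIntegral.integral_eq_sub_of_hasDerivAt (fun t _ => hf t)
      (hcont.intervalIntegrable 0 1)]
    simp [hab]
  have key : g b - g a - fderiv ℝ g b e
      = ∫ t in (0:ℝ)..1, ((fderiv ℝ g (a + t • e)) e - (fderiv ℝ g b) e) := by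
    rw [intervalIntegral.integral_sub (hcont.intervalIntegrable 0 1)
      intervalIntegrable_const, ← hint]
    simp
  rw [key]
  have hbound : ∀ t ∈ Set.Ioc (0:ℝ) 1,
      ‖(fderiv ℝ g (a + t • e)) e - (fderiv ℝ g b) e‖ ≤ M * ‖e‖ ^ 2 * (1 - t) := by
    intro t ht
    have h1 : (fderiv ℝ g (a + t • e)) e - (fderiv ℝ g b) e
        = (fderiv ℝ g (a + t • e) - fderiv ℝ g b) e := rfl
    rw [h1]
    calc ‖(fderiv ℝ g (a + t • e) - fderiv ℝ g b) e‖
        ≤ ‖fderiv ℝ g (a + t • e) - fderiv ℝ g b‖ * ‖e‖ :=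
          ContinuousLinearMap.le_opNorm _ _
      _ ≤ (M * ‖a + t • e - b‖) * ‖e‖ := by gcongr; exact hlip _ _
      _ = M * ‖e‖ ^ 2 * (1 - t) := by
          have h2 : a + t • e - b = (t - 1) • e := by rw [← hab]; module
          have h3 : ‖t - 1‖ = 1 - t := by
            rw [Real.norm_eq_abs, abs_of_nonpos (by linarith [ht.2])]; ring
          rw [h2, norm_smul, h3]; ring
  have hI : (∫ t in (0:ℝ)..1, M * ‖e‖ ^ 2 * (1 - t)) = M / 2 * ‖e‖ ^ 2 := by
    rw [intervalIntegral.integral_const_mul]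
    have h4 : ∫ t in (0:ℝ)..1, (1 - t) = 1/2 := by
      rw [intervalIntegral.integral_sub intervalIntegrable_const
        intervalIntegral.intervalIntegrable_id]
      simp
      norm_num
    rw [h4]; ring
  calc ‖∫ t in (0:ℝ)..1, ((fderiv ℝ g (a + t • e)) e - (fderiv ℝ g b) e)‖
      ≤ |∫ t in (0:ℝ)..1, M * ‖e‖ ^ 2 * (1 - t)| := by
        apply intervalIntegral.norm_integral_le_abs_of_norm_le
        · filter_upwards [MeasureTheory.ae_restrict_mem measurableSet_uIoc] with t ht
          rw [Set.uIoc_of_le zero_le_one] at ht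
          exact hbound t ht
        · exact ((continuous_const.mul (continuous_const.sub continuous_id)).intervalIntegrable 0 1)
    _ = M / 2 * ‖e‖ ^ 2 := by
        rw [hI, abs_of_nonneg]; positivity

/-- Error recursion for the Newton-type update `w⁺ = w − Ĥ⁻¹∇F(w)`:
`‖w⁺ − w*‖ ≤ (‖Ĥ − ∇²F(w)‖ / λmin(Ĥ)) ‖w − w*‖ + (M/(2 λmin(Ĥ))) ‖w − w*‖²`,
where `λmin(Ĥ) ≥ μ > 0` is a lower bound on the spectrum of the symmetric
positive definite operator `Ĥ`. -/
theorem newton_error_recursion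
    {n : ℕ} (F : EuclideanSpace ℝ (Fin n) → ℝ) (hF : ContDiff ℝ 2 F)
    (hconv : ∀ x v : EuclideanSpace ℝ (Fin n),
      0 ≤ ⟪(fderiv ℝ (gradient F) x) v, v⟫_ℝ)
    (wstar : EuclideanSpace ℝ (Fin n)) (hmin : ∀ v, F wstar ≤ F v)
    (M : ℝ) (hM : 0 ≤ M)
    (hlip : ∀ x y : EuclideanSpace ℝ (Fin n),
      ‖fderiv ℝ (gradient F) x - fderiv ℝ (gradient F) y‖ ≤ M * ‖x - y‖)
    (Hhat : EuclideanSpace ℝ (Fin n) →L[ℝ] EuclideanSpace ℝ (Fin n))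
    (hsym : ∀ u v, ⟪Hhat u, v⟫_ℝ = ⟪u, Hhat v⟫_ℝ)
    (μ : ℝ) (hμ : 0 < μ) (hpd : ∀ v, μ * ‖v‖ ^ 2 ≤ ⟪Hhat v, v⟫_ℝ)
    (w p wplus : EuclideanSpace ℝ (Fin n))
    (hp : Hhat p = gradient F w) (hwplus : wplus = w - p) :
    ‖wplus - wstar‖ ≤
      (‖Hhat - fderiv ℝ (gradient F) w‖ / μ) * ‖w - wstar‖ +
        (M / (2 * μ)) * ‖w - wstar‖ ^ 2 := by
  set g := gradient F with hg
  set H := fderiv ℝ g w with hH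
  set e := w - wstar with he
  set d := wplus - wstar with hd
  -- gradient is C¹
  have hgC1 : ContDiff ℝ 1 g := by
    have h1 : ContDiff ℝ 1 (fderiv ℝ F) := hF.fderiv_right (by norm_num)
    have h2 : g = fun x => (InnerProductSpace.toDual ℝ _).symm (fderiv ℝ F x) := rfl
    rw [h2]
    exact (InnerProductSpace.toDual ℝ _).symm.contDiff.comp h1
  -- gradient vanishes at the minimizer
  have hg0 : g wstar = 0 := by
    have h : IsLocalMin F wstar := Filter.Eventually.of_forall hmin
    rw [hg, gradient, h.fderiv_eq_zero, map_zero]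
  -- Taylor bound
  have htay : ‖g w - g wstar - H e‖ ≤ M / 2 * ‖e‖ ^ 2 :=
    taylor_bound g hgC1 M hM hlip wstar w
  have htay' : ‖g w - H e‖ ≤ M / 2 * ‖e‖ ^ 2 := by
    rwa [hg0, sub_zero] at htay
  -- algebraic identity: Hhat d = (Hhat - H) e - (g w - H e)
  have hkey : Hhat d = (Hhat - H) e - (g w - H e) := by
    have : d = e - p := by rw [hd, he, hwplus]; abel
    rw [this, map_sub, hp]
    simp only [ContinuousLinearMap.sub_apply]
    abel
  -- norm bound on Hhat d
  have hnorm : ‖Hhat d‖ ≤ ‖Hhat - H‖ * ‖e‖ + M / 2 * ‖e‖ ^ 2 := by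
    rw [hkey]
    calc ‖(Hhat - H) e - (g w - H e)‖ ≤ ‖(Hhat - H) e‖ + ‖g w - H e‖ := norm_sub_le _ _
      _ ≤ ‖Hhat - H‖ * ‖e‖ + M / 2 * ‖e‖ ^ 2 := by
          gcongr
          exact ContinuousLinearMap.le_opNorm _ _
  -- coercivity: μ ‖d‖ ≤ ‖Hhat d‖
  have hcoer : μ * ‖d‖ ≤ ‖Hhat d‖ := by
    rcases eq_or_ne d 0 with h | h
    · simp [h]
    · have h1 : μ * ‖d‖ ^ 2 ≤ ⟪Hhat d, d⟫_ℝ := hpd d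
      have h2 : ⟪Hhat d, d⟫_ℝ ≤ ‖Hhat d‖ * ‖d‖ := real_inner_le_norm _ _
      have h3 : 0 < ‖d‖ := norm_pos_iff.mpr h
      nlinarith
  -- conclude
  have := hcoer.trans hnorm
  rw [div_mul_eq_mul_div, div_mul_eq_mul_div, div_add_div _ _ (ne_of_gt hμ)
    (ne_of_gt (by linarith : (0:ℝ) < 2 * μ)), le_div_iff₀ (by positivity)]
  nlinarith [norm_nonneg d, norm_nonneg e, norm_nonneg (Hhat - H)]
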